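/- For positive masses m₁, m₂, m₃ with m₂₃ = m₂m₃/(m₂+m₃) and m₃₁ = m₃m₁/(m₃+m₁), one has for all real q, p: q²/(2m₂₃) + q·p/m₃ + p²/(2m₃₁) ≥ (q² + p²)/(2·max{m₁, m₂}). -/

import Mathlib

/-- For positive masses, q²/(2m₂₃) + qp/m₃ + p²/(2m₃₁) ≥ (q²+p²)/(2 max{m₁,m₂}). -/
theorem stmt_3 (m1 m2 m3 : ℝ) (h1 : 0 < m1) (h2 : 0 < m2) (h3 : 0 < m3) (q p : ℝ) :
    (q ^ 2 + p ^ 2) / (2 * max m1 m2) ≤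
      q ^ 2 / (2 * (m2 * m3 / (m2 + m3))) + q * p / m3 +
        p ^ 2 / (2 * (m3 * m1 / (m3 + m1))) := by
  have h23 : 0 < m2 + m3 := by linarith
  have h31 : 0 < m3 + m1 := by linarith
  have e1 : q ^ 2 / (2 * (m2 * m3 / (m2 + m3))) = q ^ 2 * (m2 + m3) / (2 * (m2 * m3)) := by
    rw [div_eq_div_iff (by positivity) (by positivity)]
    field_simp
  have e2 : p ^ 2 / (2 * (m3 * m1 / (m3 + m1))) = p ^ 2 * (m3 + m1) / (2 * (m3 * m1)) := by
    rw [div_eq_div_iff (by positivity) (by positivity)]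
    field_simp
  rw [e1, e2]
  rcases le_total m1 m2 with h | h
  · rw [max_eq_right h,
      div_add_div _ _ (by positivity) (by positivity),
      div_add_div _ _ (by positivity) (by positivity),
      div_le_div_iff₀ (by positivity) (by positivity)]
    nlinarith [mul_nonneg (mul_nonneg (mul_pos h1 (mul_pos h2 h2)).le
        (mul_pos h3 h3).le) (sq_nonneg (q + p)),
      mul_nonneg (mul_nonneg (mul_nonneg (sub_nonneg.2 h) h2.le)
        (mul_pos h3 (mul_pos h3 h3)).le) (sq_nonneg p)]
  · rw [max_eq_left h,
      div_add_div _ _ (by positivity) (by positivity),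
      div_add_div _ _ (by positivity) (by positivity),
      div_le_div_iff₀ (by positivity) (by positivity)]
    nlinarith [mul_nonneg (mul_nonneg (mul_pos (mul_pos h1 h1) h2).le
        (mul_pos h3 h3).le) (sq_nonneg (q + p)),
      mul_nonneg (mul_nonneg (mul_nonneg (sub_nonneg.2 h) h1.le)
        (mul_pos h3 (mul_pos h3 h3)).le) (sq_nonneg q)]
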